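/- Let A = (a_{ij}) be a 2×2 real lower-triangular matrix, c = A𝟙, b ∈ ℝ² with b₁, b₂ ≥ 0, B = diag(b), and J the 2×2 shift matrix (J₂₁ = 1, all other entries 0). Assume the order conditions bᵀ𝟙 = 1 and bᵀJc = 1/2, and assume the symmetric matrix R = bbᵀ − BJA − (BJA)ᵀ is positive semi-definite. Then b₁ = b₂ = 1/2 and a₁₁ = 1. -/

import Mathlib

open Matrix

set_option maxHeartbeats 1000000

/-- For a two-stage second-order PRK scheme with nonnegative weights whose
length-increase matrix `R = bbᵀ − BJA − (BJA)ᵀ` is positive semi-definite,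
necessarily `b₁ = b₂ = 1/2` and `a₁₁ = 1`. -/
theorem stmt6 (A : Matrix (Fin 2) (Fin 2) ℝ) (hA : A 0 1 = 0)
    (b : Fin 2 → ℝ) (hb0 : 0 ≤ b 0) (hb1 : 0 ≤ b 1)
    (c : Fin 2 → ℝ) (hc : c = A *ᵥ fun _ => 1)
    (J : Matrix (Fin 2) (Fin 2) ℝ) (hJ : J = !![0, 0; 1, 0])
    (ord1 : ∑ i, b i = 1)
    (ord2 : b ⬝ᵥ (J *ᵥ c) = 1 / 2)
    (hR : (Matrix.vecMulVec b b - Matrix.diagonal b * J * A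
            - (Matrix.diagonal b * J * A)ᵀ).PosSemidef) :
    b 0 = 1 / 2 ∧ b 1 = 1 / 2 ∧ A 0 0 = 1 := by
  have q1 := hR.dotProduct_mulVec_nonneg ![b 1, b 0]
  have q2 := hR.dotProduct_mulVec_nonneg ![2, 1]
  have q3 := hR.dotProduct_mulVec_nonneg ![1, 2]
  simp only [hJ, Matrix.sub_apply, Matrix.vecMulVec_apply, Matrix.transpose_apply,
    Matrix.mul_apply, Matrix.mulVec, dotProduct, Fin.sum_univ_two,
    Matrix.diagonal_apply, Matrix.cons_val', Matrix.cons_val_zero, Matrix.cons_val_one,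
    Matrix.head_cons, Matrix.empty_val', Matrix.cons_val_fin_one, star_trivial,
    Pi.star_apply] at q1 q2 q3
  simp at q1 q2 q3
  rw [hA] at q1 q2 q3
  simp only [hc, Matrix.mulVec, dotProduct, Fin.sum_univ_two, hJ,
    Matrix.cons_val', Matrix.cons_val_zero, Matrix.cons_val_one, Matrix.head_cons,
    Matrix.empty_val', Matrix.cons_val_fin_one] at ord2
  simp at ord2
  rw [hA, add_zero] at ord2
  rw [Fin.sum_univ_two] at ord1
  rw [ord2] at q1 q2 q3
  have e1 : b 1 = 1 - b 0 := by linarith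
  rw [e1] at q1 q2 q3
  set x : ℝ := b 0 with hx
  have F1 : 0 ≤ 4 * (x * (1 - x))^2 - x * (1 - x) := by nlinarith [q1]
  have u : 0 ≤ x^2 + 2*x - 1 := by nlinarith [q2]
  have v : 0 ≤ x^2 - 4*x + 2 := by nlinarith [q3]
  have F2 : 0 ≤ (x * (1 - x))^2 + 8 * (x * (1 - x)) - 2 := by nlinarith [mul_nonneg u v]
  have F3 : 0 ≤ x * (1 - x) := by nlinarith [hb0, e1, hb1]
  have hp : 1/4 ≤ x * (1 - x) := by nlinarith [F1, F2, F3, mul_nonneg F3 F1]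
  have hb0' : b 0 = 1/2 := by nlinarith [hp, sq_nonneg (x - 1/2)]
  have hb1' : b 1 = 1/2 := by rw [e1]; linarith
  refine ⟨hb0', hb1', ?_⟩
  rw [hb1'] at ord2
  linarith
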